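/- Let n ≥ 1, let K be a field, let v, w ∈ K, and let X₁,…,Xₙ be nonzero elements of K. Define the n×n matrix B by B_{ij} = (−1)^{i+j} · (∏_{m=1}^{i} X_m⁻¹) · ∑_{l=1}^{j} binom(j−1, l−1) · v^{l} · w^{j−l} · h_{l−1}(X₁⁻¹,…,X_i⁻¹). Then det(B) = v^{n(n+1)/2} · ∏_{i=1}^{n} X_i^{−n}. -/

import Mathlib

/-- The complete homogeneous symmetric polynomial of degree `k` in the variables given by the
list `l`: the sum of all monomials of total degree `k`. -/
def hh {R : Type*} [CommSemiring R] (k : ℕ) (l : List R) : R :=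
  ∑ a ∈ Finset.Nat.antidiagonalTuple l.length k, ∏ i : Fin l.length, l.get i ^ a i

/-- The list of variables X_a, X_{a+1}, …, X_b (empty if a > b). -/
def seg {R : Type*} (X : ℕ → R) (a b : ℕ) : List R :=
  (List.range (b + 1 - a)).map fun t => X (a + t)

def myh {R : Type*} [CommSemiring R] : ℕ → List R → R
  | k, [] => if k = 0 then 1 else 0
  | k, x :: t => ∑ j ∈ Finset.range (k + 1), x ^ j * myh (k - j) t

def consEmb {m : ℕ} (a : ℕ) : (Fin m → ℕ) ↪ (Fin (m+1) → ℕ) :=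
  ⟨fun t => Fin.cons a t, Fin.cons_right_injective (α := fun _ => ℕ) a⟩

lemma adT_succ (m k : ℕ) : Finset.Nat.antidiagonalTuple (m+1) k =
    (Finset.HasAntidiagonal.antidiagonal k).biUnion fun p =>
      (Finset.Nat.antidiagonalTuple m p.2).map (consEmb p.1) := by
  ext x
  simp only [Finset.Nat.mem_antidiagonalTuple, Finset.mem_biUnion, Finset.mem_map,
    Finset.HasAntidiagonal.mem_antidiagonal, consEmb, Function.Embedding.coeFn_mk, Prod.exists]
  constructor
  · intro hx
    refine ⟨x 0, ∑ i, Fin.tail x i, ?_, Fin.tail x, rfl, Fin.cons_self_tail x⟩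
    rw [← hx, Fin.sum_univ_succ]; rfl
  · rintro ⟨a, b, hab, t, ht, rfl⟩
    rw [Fin.sum_univ_succ]
    simp [Fin.tail, ht, hab]

lemma adT_disj (m k : ℕ) : ∀ p ∈ Finset.HasAntidiagonal.antidiagonal k, ∀ q ∈ Finset.HasAntidiagonal.antidiagonal k, p ≠ q →
    Disjoint ((Finset.Nat.antidiagonalTuple m p.2).map (consEmb p.1))
      ((Finset.Nat.antidiagonalTuple m q.2).map (consEmb q.1)) := by
  intro p hp q hq hpq
  rw [Finset.disjoint_left]
  rintro x hx hx'
  simp only [Finset.mem_map, consEmb, Function.Embedding.coeFn_mk,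
    Finset.Nat.mem_antidiagonalTuple] at hx hx'
  obtain ⟨t, ht, rfl⟩ := hx
  obtain ⟨s, hs, he⟩ := hx'
  apply hpq
  have h0 : q.1 = p.1 := by
    have := congrFun he 0; simpa using this
  have h2 : q.2 = p.2 := by
    rw [Finset.HasAntidiagonal.mem_antidiagonal] at hp hq
    omega
  ext <;> omega

lemma hh_nil {R : Type*} [CommSemiring R] (k : ℕ) : hh k ([] : List R) = if k = 0 then 1 else 0 := by
  cases k with
  | zero => simp [hh]
  | succ k => simp [hh]

lemma hh_cons {R : Type*} [CommSemiring R] (k : ℕ) (x : R) (t : List R) :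
    hh k (x :: t) = ∑ j ∈ Finset.range (k + 1), x ^ j * hh (k - j) t := by
  rw [hh]
  show (∑ a ∈ Finset.Nat.antidiagonalTuple (t.length + 1) k, _) = _
  rw [adT_succ, Finset.sum_biUnion (adT_disj _ _)]
  rw [Finset.Nat.sum_antidiagonal_eq_sum_range_succ_mk]
  refine Finset.sum_congr rfl fun j hj => ?_
  rw [Finset.sum_map, hh, Finset.mul_sum]
  refine Finset.sum_congr rfl fun b hb => ?_
  simp only [consEmb, Function.Embedding.coeFn_mk]
  show (∏ i : Fin (t.length + 1), _) = _
  rw [Fin.prod_univ_succ]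
  simp [Fin.cons_succ]

lemma hh_eq_myh {R : Type*} [CommSemiring R] (k : ℕ) (l : List R) : hh k l = myh k l := by
  induction l generalizing k with
  | nil => rw [hh_nil, myh]
  | cons x t ih => rw [hh_cons, myh]; exact Finset.sum_congr rfl fun j _ => by rw [ih]

lemma myh_zero {R : Type*} [CommSemiring R] (l : List R) : myh 0 l = 1 := by
  induction l with
  | nil => simp [myh]
  | cons x t ih => simp [myh, ih]

lemma myh_singleton {R : Type*} [CommSemiring R] (k : ℕ) (x : R) : myh k [x] = x ^ k := by
  rw [myh]
  rw [Finset.sum_eq_single k]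
  · simp [myh]
  · intro j hj hjk
    rw [Finset.mem_range] at hj
    have : k - j ≠ 0 := by omega
    simp [myh, this]
  · intro h; exact absurd (Finset.self_mem_range_succ k) h

lemma myh_append {R : Type*} [CommSemiring R] (l : List R) (x : R) (k : ℕ) :
    myh (k+1) (l ++ [x]) = myh (k+1) l + x * myh k (l ++ [x]) := by
  induction l generalizing k with
  | nil =>
    simp only [List.nil_append, myh_singleton]
    rw [show myh (k+1) ([] : List R) = 0 by simp [myh]]
    ring
  | cons y t ih =>
    show myh (k+1) (y :: (t ++ [x])) = _
    calc myh (k+1) (y :: (t ++ [x]))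
        = ∑ j ∈ Finset.range (k+1+1), y^j * myh (k+1-j) (t++[x]) := by rw [myh]
      _ = (∑ j ∈ Finset.range (k+1), y^j * myh (k+1-j) (t++[x]))
            + y^(k+1) * myh 0 (t++[x]) := by
          rw [Finset.sum_range_succ]; simp
      _ = (∑ j ∈ Finset.range (k+1), y^j * (myh (k+1-j) t + x * myh (k-j) (t++[x])))
            + y^(k+1) * myh 0 t := by
          rw [myh_zero, myh_zero]
          refine congrArg₂ _ (Finset.sum_congr rfl fun j hj => ?_) rfl
          rw [Finset.mem_range] at hj
          have h1 : k + 1 - j = (k - j) + 1 := by omega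
          rw [h1, ih]
      _ = ((∑ j ∈ Finset.range (k+1), y^j * myh (k+1-j) t) + y^(k+1) * myh 0 t)
            + x * ∑ j ∈ Finset.range (k+1), y^j * myh (k-j) (t++[x]) := by
          simp only [mul_add]
          rw [Finset.sum_add_distrib, Finset.mul_sum]
          have hb : ∑ j ∈ Finset.range (k+1), y^j * (x * myh (k-j) (t++[x]))
              = ∑ j ∈ Finset.range (k+1), x * (y^j * myh (k-j) (t++[x])) :=
            Finset.sum_congr rfl fun j _ => by ring
          rw [hb]; ring
      _ = myh (k+1) (y::t) + x * myh k (y :: (t++[x])) := by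
          conv_rhs => rw [myh, myh, Finset.sum_range_succ]
          simp

lemma seg_succ {R : Type*} (X : ℕ → R) (b : ℕ) :
    seg X 1 (b+1) = seg X 1 b ++ [X (b+1)] := by
  unfold seg
  rw [show b+1+1-1 = b+1 from rfl, show b+1-1 = b from rfl, List.range_succ, List.map_append]
  simp [Nat.add_comm]

lemma myh_seg_succ {R : Type*} [CommSemiring R] (Y : ℕ → R) (b k : ℕ) :
    myh (k+1) (seg Y 1 (b+1)) = myh (k+1) (seg Y 1 b) + Y (b+1) * myh k (seg Y 1 (b+1)) := by
  rw [seg_succ, myh_append]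

lemma detH {R : Type*} [CommRing R] (Y : ℕ → R) :
    ∀ (n m : ℕ), Matrix.det (Matrix.of fun i j : Fin n => myh (j : ℕ) (seg Y 1 ((i:ℕ)+1+m)))
      = ∏ i : Fin n, Y ((i:ℕ)+1+m) ^ (i:ℕ) := by
  intro n
  induction n with
  | zero => intro m; simp
  | succ n ih =>
    intro m
    set A : Matrix (Fin (n+1)) (Fin (n+1)) R :=
      Matrix.of (fun i j : Fin (n+1) => myh (j:ℕ) (seg Y 1 ((i:ℕ)+1+m))) with hA
    set B : Matrix (Fin (n+1)) (Fin (n+1)) R := Matrix.of (fun i j : Fin (n+1) =>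
      if (i:ℕ) = 0 then myh (j:ℕ) (seg Y 1 ((i:ℕ)+1+m))
      else myh (j:ℕ) (seg Y 1 ((i:ℕ)+1+m)) - myh (j:ℕ) (seg Y 1 ((i:ℕ)+m))) with hB
    have hdet : A.det = B.det := by
      apply Matrix.det_eq_of_forall_row_eq_smul_add_pred (fun _ => (1:R))
      · intro j; simp [hA, hB]
      · intro i j
        simp only [hA, hB, Matrix.of_apply]
        have h1 : ((i.succ : Fin (n+1)) : ℕ) = (i:ℕ)+1 := rfl
        have h2 : ((i.castSucc : Fin (n+1)) : ℕ) = (i:ℕ) := rfl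
        rw [h1, h2, if_neg (by omega)]
        ring
    have hcol : ∀ i : Fin (n+1), i ≠ 0 → B i 0 = 0 := by
      intro i hi
      have : (i:ℕ) ≠ 0 := fun h => hi (Fin.ext h)
      simp [hB, this, myh_zero, hi]
    have hminor : B.submatrix ((0 : Fin (n+1)).succAbove) Fin.succ =
        Matrix.of (fun i j : Fin n => Y ((i:ℕ)+2+m) *
          myh (j:ℕ) (seg Y 1 ((i:ℕ)+1+(m+1)))) := by
      ext i j
      simp only [Matrix.submatrix_apply, Fin.succAbove_zero, hB, Matrix.of_apply]
      have h1 : ((i.succ : Fin (n+1)) : ℕ) = (i:ℕ)+1 := rfl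
      have h2 : ((j.succ : Fin (n+1)) : ℕ) = (j:ℕ)+1 := rfl
      rw [h1, h2, if_neg (by omega)]
      rw [show (i:ℕ)+1+1+m = ((i:ℕ)+1+m)+1 by omega, myh_seg_succ Y ((i:ℕ)+1+m) (j:ℕ),
        show (i:ℕ)+1+(m+1) = (i:ℕ)+1+m+1 by omega]
      ring
    have hdetB : B.det = ∏ i : Fin n, (Y ((i:ℕ)+2+m) * Y ((i:ℕ)+1+(m+1)) ^ (i:ℕ)) := by
      rw [Matrix.det_succ_column_zero]
      rw [Finset.sum_eq_single (0 : Fin (n+1))]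
      · rw [hminor]
        have : Matrix.det (Matrix.of (fun i j : Fin n => Y ((i:ℕ)+2+m) *
            myh (j:ℕ) (seg Y 1 ((i:ℕ)+1+(m+1))))) =
            (∏ i : Fin n, Y ((i:ℕ)+2+m)) *
              Matrix.det (Matrix.of (fun i j : Fin n => myh (j:ℕ) (seg Y 1 ((i:ℕ)+1+(m+1))))) :=
          Matrix.det_mul_column _ _
        rw [this, ih (m+1)]
        have hB00 : B 0 0 = 1 := by simp [hB, myh_zero]
        rw [hB00]
        rw [Finset.prod_mul_distrib]
        simp
      · intro i _ hi
        rw [hcol i hi]; ring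
      · intro h; exact absurd (Finset.mem_univ _) h
    rw [hdet, hdetB, Fin.prod_univ_succ]
    simp only [Fin.val_zero, Fin.val_succ, pow_zero, one_mul]
    refine Finset.prod_congr rfl fun i _ => ?_
    rw [show (i:ℕ)+1+1+m = (i:ℕ)+2+m by omega, show (i:ℕ)+1+(m+1) = (i:ℕ)+2+m by omega,
      pow_succ']

lemma sum_fin_succ_val (n : ℕ) : (∑ l : Fin n, ((l:ℕ)+1)) = n * (n+1) / 2 := by
  have h2 : (∑ l : Fin n, ((l:ℕ)+1)) * 2 = n * (n+1) := by
    rw [Fin.sum_univ_eq_sum_range (fun l => l + 1) n, Finset.sum_add_distrib,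
      Finset.sum_const, Finset.card_range, add_mul, Finset.sum_range_id_mul_two]
    cases n with
    | zero => rfl
    | succ n => simp [Nat.succ_sub_one]; ring
  omega

lemma prodY {K : Type*} [CommRing K] (Y : ℕ → K) :
    ∀ n : ℕ, (∏ i : Fin n, ∏ m ∈ Finset.Icc 1 ((i:ℕ)+1), Y m) *
      (∏ i : Fin n, Y ((i:ℕ)+1) ^ (i:ℕ)) = ∏ m ∈ Finset.Icc 1 n, Y m ^ n := by
  intro n
  induction n with
  | zero => simp
  | succ n ih =>
    rw [Fin.prod_univ_castSucc, Fin.prod_univ_castSucc]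
    simp only [Fin.coe_castSucc, Fin.val_last]
    rw [Finset.prod_Icc_succ_top (Nat.le_add_left 1 n),
      Finset.prod_Icc_succ_top (Nat.le_add_left 1 n)]
    calc ((∏ i : Fin n, ∏ m ∈ Finset.Icc 1 ((i:ℕ)+1), Y m) *
            ((∏ m ∈ Finset.Icc 1 n, Y m) * Y (n+1))) *
          ((∏ i : Fin n, Y ((i:ℕ)+1) ^ (i:ℕ)) * Y (n+1) ^ n)
        = ((∏ i : Fin n, ∏ m ∈ Finset.Icc 1 ((i:ℕ)+1), Y m) *
            (∏ i : Fin n, Y ((i:ℕ)+1) ^ (i:ℕ))) *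
          ((∏ m ∈ Finset.Icc 1 n, Y m) * (Y (n+1) * Y (n+1) ^ n)) := by ring
      _ = (∏ m ∈ Finset.Icc 1 n, Y m ^ n) * (∏ m ∈ Finset.Icc 1 n, Y m) * Y (n+1) ^ (n+1) := by
          rw [ih, pow_succ']; ring
      _ = (∏ m ∈ Finset.Icc 1 n, Y m ^ (n+1)) * Y (n+1) ^ (n+1) := by
          rw [← Finset.prod_mul_distrib]
          congr 1
          exact Finset.prod_congr rfl fun m _ => (pow_succ _ _).symm

lemma sign_sq {K : Type*} [CommRing K] (n : ℕ) :
    (∏ i : Fin n, (-1:K)^((i:ℕ)+1)) * (∏ j : Fin n, (-1:K)^((j:ℕ)+1)) = 1 := by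
  rw [← Finset.prod_mul_distrib]
  rw [Finset.prod_eq_one]
  intro i _
  rw [← pow_add]
  exact Even.neg_one_pow ⟨(i:ℕ)+1, rfl⟩


/-- The determinant evaluation det(B_n) = v^{n(n+1)/2} ∏_i X_i^{−n} of Section 7.4, where
B_{ij} = (−1)^{i+j} (∏_{m=1}^{i} X_m⁻¹) ∑_{l=1}^{j} binom(j−1,l−1) v^l w^{j−l}
h_{l−1}(X₁⁻¹,…,X_i⁻¹). Indices `i j : Fin n` represent the paper's `i+1`, `j+1`. -/
theorem stmt14 {K : Type*} [Field K] (n : ℕ) (hn : 1 ≤ n) (v w : K) (X : ℕ → K)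
    (hX : ∀ i ∈ Finset.Icc 1 n, X i ≠ 0) :
    Matrix.det (Matrix.of fun i j : Fin n =>
        (-1 : K) ^ (((i : ℕ) + 1) + ((j : ℕ) + 1)) *
          (∏ m ∈ Finset.Icc 1 ((i : ℕ) + 1), (X m)⁻¹) *
            ∑ l ∈ Finset.Icc 1 ((j : ℕ) + 1),
              (Nat.choose (j : ℕ) (l - 1) : K) * v ^ l * w ^ ((j : ℕ) + 1 - l) *
                hh (l - 1) (seg (fun m => (X m)⁻¹) 1 ((i : ℕ) + 1))) =
      v ^ (n * (n + 1) / 2) * ∏ i ∈ Finset.Icc 1 n, X i ^ (-(n : ℤ)) := by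
  classical
  set Y : ℕ → K := fun m => (X m)⁻¹ with hY
  set A : Matrix (Fin n) (Fin n) K :=
    Matrix.of (fun i l : Fin n => myh (l:ℕ) (seg Y 1 ((i:ℕ)+1))) with hAdef
  set T : Matrix (Fin n) (Fin n) K := Matrix.of (fun l j : Fin n =>
    (Nat.choose (j:ℕ) (l:ℕ) : K) * v^((l:ℕ)+1) * w^((j:ℕ)-(l:ℕ))) with hTdef
  have entry : ∀ i j : Fin n,
      (∑ l ∈ Finset.Icc 1 ((j:ℕ)+1), (Nat.choose (j:ℕ) (l-1) : K) * v ^ l * w ^ ((j:ℕ)+1-l) *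
        hh (l-1) (seg Y 1 ((i:ℕ)+1))) = (A * T) i j := by
    intro i j
    rw [Matrix.mul_apply, ← Finset.Ico_add_one_right_eq_Icc, Finset.sum_Ico_eq_sum_range,
      show (j:ℕ)+1+1-1 = (j:ℕ)+1 from rfl]
    have hss : Finset.range ((j:ℕ)+1) ⊆ Finset.range n := by
      intro x hx
      rw [Finset.mem_range] at hx ⊢
      have := j.isLt; omega
    rw [Finset.sum_subset hss (fun x hx hxn => by
      have hjx : (j:ℕ) < x := by
        rw [Finset.mem_range] at hxn
        omega
      rw [show 1+x-1 = x from by omega, Nat.choose_eq_zero_of_lt hjx]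
      simp)]
    rw [← Fin.sum_univ_eq_sum_range (fun l =>
      (Nat.choose (j:ℕ) (1+l-1) : K) * v ^ (1+l) * w ^ ((j:ℕ)+1-(1+l)) *
        hh (1+l-1) (seg Y 1 ((i:ℕ)+1))) n]
    refine Finset.sum_congr rfl fun l _ => ?_
    simp only [hAdef, hTdef, Matrix.of_apply]
    rw [show 1+(l:ℕ)-1 = (l:ℕ) from by omega, show (j:ℕ)+1-(1+(l:ℕ)) = (j:ℕ)-(l:ℕ) from by omega,
      hh_eq_myh, show 1+(l:ℕ) = (l:ℕ)+1 from by omega]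
    ring
  have hM : (Matrix.of fun i j : Fin n =>
        (-1 : K) ^ (((i : ℕ) + 1) + ((j : ℕ) + 1)) *
          (∏ m ∈ Finset.Icc 1 ((i : ℕ) + 1), (X m)⁻¹) *
            ∑ l ∈ Finset.Icc 1 ((j : ℕ) + 1),
              (Nat.choose (j : ℕ) (l - 1) : K) * v ^ l * w ^ ((j : ℕ) + 1 - l) *
                hh (l - 1) (seg Y 1 ((i : ℕ) + 1))) =
      Matrix.of (fun i j : Fin n =>
        ((-1:K)^((i:ℕ)+1) * ∏ m ∈ Finset.Icc 1 ((i:ℕ)+1), Y m) *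
          ((fun j' : Fin n => (-1:K)^((j':ℕ)+1)) j * (A * T) i j)) := by
    ext i j
    simp only [Matrix.of_apply]
    rw [← entry i j, pow_add]
    simp only [hY]
    ring
  rw [hM, Matrix.det_mul_column (fun i : Fin n => (-1:K)^((i:ℕ)+1) * ∏ m ∈ Finset.Icc 1 ((i:ℕ)+1), Y m)
    (fun i j : Fin n => (fun j' : Fin n => (-1:K)^((j':ℕ)+1)) j * (A * T) i j)]
  rw [show (Matrix.det fun i j : Fin n => (fun j' : Fin n => (-1:K)^((j':ℕ)+1)) j * (A * T) i j)
      = Matrix.det (Matrix.of fun i j : Fin n =>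
        (fun j' : Fin n => (-1:K)^((j':ℕ)+1)) j * (A * T) i j) from rfl,
    Matrix.det_mul_row, Matrix.det_mul]
  have hdA : A.det = ∏ i : Fin n, Y ((i:ℕ)+1) ^ (i:ℕ) := by
    have h := detH Y n 0
    simp only [Nat.add_zero] at h
    exact h
  have hdT : T.det = v ^ (n*(n+1)/2) := by
    have tri : T.BlockTriangular id := by
      intro i j hij
      have hij' : (j:ℕ) < (i:ℕ) := hij
      simp only [hTdef, Matrix.of_apply]
      rw [Nat.choose_eq_zero_of_lt hij']
      simp
    rw [Matrix.det_of_upperTriangular tri]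
    have : ∀ l : Fin n, T l l = v ^ ((l:ℕ)+1) := by
      intro l
      simp [hTdef, Nat.choose_self, Nat.sub_self]
    rw [Finset.prod_congr rfl fun l _ => this l, Finset.prod_pow_eq_pow_sum,
      sum_fin_succ_val]
  rw [hdA, hdT, Finset.prod_mul_distrib]
  have hrhs : ∀ m ∈ Finset.Icc 1 n, X m ^ (-(n:ℤ)) = Y m ^ n := by
    intro m _
    rw [zpow_neg, zpow_natCast, ← inv_pow]
  rw [Finset.prod_congr rfl hrhs, ← prodY Y n]
  have hs := sign_sq (K := K) n
  set s := ∏ i : Fin n, (-1:K)^((i:ℕ)+1) with hsdef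
  set PP := ∏ i : Fin n, ∏ m ∈ Finset.Icc 1 ((i:ℕ)+1), Y m with hPP
  set DA := ∏ i : Fin n, Y ((i:ℕ)+1) ^ (i:ℕ) with hDA
  calc s * PP * (s * (DA * v ^ (n*(n+1)/2)))
      = (s * s) * (PP * DA) * v ^ (n*(n+1)/2) := by ring
    _ = v ^ (n*(n+1)/2) * (PP * DA) := by rw [hs]; ring
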